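/- Consider the chain complexes of abelian groups: A with A_1 = A_0 = ℤ and differential multiplication by 2; B with B_2 = B_1 = ℤ and differential multiplication by 4; C with C_2 = C_1 = ℤ and differential multiplication by 4; D with D_2 = ℤ (all other terms 0). Let f : A → B have sole nonzero component f_1 = 1 : A_1 → B_1, let g : B → C have g_2 = 2 and g_1 = 2, and let h : C → D have sole nonzero component h_2 = 2 : C_2 → D_2. Then f, g, h are chain maps, g∘f and h∘g are nullhomotopic, and for EVERY nullhomotopy S of g∘f and EVERY nullhomotopy T of h∘g, the Toda map φ(S,T) : ΣA → D is not chain homotopic to zero. (Hence the Toda bracket ⟨h,g,f⟩ does not vanish.) -/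
import Mathlib


/-! STATEMENT 17.  Chain complexes of abelian groups are encoded as families
`M r : ℤ → Type`, `(M r) m = Fin (r m) → ℤ` (so `r m` copies of `ℤ` in degree `m`),
with differentials `d m : (M r) (m+1) →ₗ[ℤ] (M r) m` given by integer matrices. -/

abbrev M (r : ℤ → ℕ) (m : ℤ) : Type := Fin (r m) → ℤ

/-- A has ℤ in degrees 0 and 1 -/
def rA : ℤ → ℕ := fun m => if m = 0 ∨ m = 1 then 1 else 0
/-- B has ℤ in degrees 1 and 2 -/
def rB : ℤ → ℕ := fun m => if m = 1 ∨ m = 2 then 1 else 0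
/-- C has ℤ in degrees 1 and 2 -/
def rC : ℤ → ℕ := fun m => if m = 1 ∨ m = 2 then 1 else 0
/-- D has ℤ in degree 2 only -/
def rD : ℤ → ℕ := fun m => if m = 2 then 1 else 0

/-- A = (ℤ --2--> ℤ) in degrees 1 → 0 -/
noncomputable def dA (m : ℤ) : M rA (m+1) →ₗ[ℤ] M rA m :=
  Matrix.mulVecLin (Matrix.of fun _ _ => if m = 0 then (2:ℤ) else 0)

/-- B = (ℤ --4--> ℤ) in degrees 2 → 1 -/
noncomputable def dB (m : ℤ) : M rB (m+1) →ₗ[ℤ] M rB m :=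
  Matrix.mulVecLin (Matrix.of fun _ _ => if m = 1 then (4:ℤ) else 0)

/-- C = (ℤ --4--> ℤ) in degrees 2 → 1 -/
noncomputable def dC (m : ℤ) : M rC (m+1) →ₗ[ℤ] M rC m :=
  Matrix.mulVecLin (Matrix.of fun _ _ => if m = 1 then (4:ℤ) else 0)

/-- D is concentrated in degree 2, so its differential is 0 -/
noncomputable def dD (m : ℤ) : M rD (m+1) →ₗ[ℤ] M rD m :=
  Matrix.mulVecLin (Matrix.of fun _ _ => (0:ℤ))

/-- f : A → B with sole nonzero component f₁ = 1 : A₁ → B₁ -/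
noncomputable def fm (m : ℤ) : M rA m →ₗ[ℤ] M rB m :=
  Matrix.mulVecLin (Matrix.of fun _ _ => if m = 1 then (1:ℤ) else 0)

/-- g : B → C with g₂ = 2 and g₁ = 2 -/
noncomputable def gm (m : ℤ) : M rB m →ₗ[ℤ] M rC m :=
  Matrix.mulVecLin (Matrix.of fun _ _ => if m = 2 ∨ m = 1 then (2:ℤ) else 0)

/-- h : C → D with sole nonzero component h₂ = 2 : C₂ → D₂ -/
noncomputable def hm (m : ℤ) : M rC m →ₗ[ℤ] M rD m :=
  Matrix.mulVecLin (Matrix.of fun _ _ => if m = 2 then (2:ℤ) else 0)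

lemma eval_c {p q : ℕ} (c : ℤ) (x : Fin q → ℤ) (i : Fin p) :
    Matrix.mulVecLin (Matrix.of fun (_ : Fin p) (_ : Fin q) => c) x i = c * ∑ j, x j := by
  simp [Matrix.mulVecLin, Matrix.mulVec, dotProduct, Finset.mul_sum]

lemma comp_const {p q r : ℕ} (a b : ℤ) :
    (Matrix.mulVecLin (Matrix.of fun (_ : Fin p) (_ : Fin q) => a)).comp
      (Matrix.mulVecLin (Matrix.of fun (_ : Fin q) (_ : Fin r) => b)) =
    Matrix.mulVecLin (Matrix.of fun (_ : Fin p) (_ : Fin r) => (q : ℤ) * (a * b)) := by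
  rw [← Matrix.mulVecLin_mul]
  congr 1
  ext i j
  simp [Matrix.mul_apply, Finset.sum_const, mul_assoc]

lemma add_const {p q : ℕ} (a b : ℤ) :
    Matrix.mulVecLin (Matrix.of fun (_ : Fin p) (_ : Fin q) => a) +
      Matrix.mulVecLin (Matrix.of fun (_ : Fin p) (_ : Fin q) => b) =
    Matrix.mulVecLin (Matrix.of fun (_ : Fin p) (_ : Fin q) => a + b) := by
  refine LinearMap.ext fun x => funext fun i => ?_
  simp only [LinearMap.add_apply, Pi.add_apply, eval_c]
  ring

lemma const_eq {p q : ℕ} {a b : ℤ} (h : a = b) :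
    Matrix.mulVecLin (Matrix.of fun (_ : Fin p) (_ : Fin q) => a) =
    Matrix.mulVecLin (Matrix.of fun (_ : Fin p) (_ : Fin q) => b) := by rw [h]

lemma const_zero {p q : ℕ} {a : ℤ} (h : a = 0) :
    Matrix.mulVecLin (Matrix.of fun (_ : Fin p) (_ : Fin q) => a) = 0 := by
  subst h
  have : (Matrix.of fun (_ : Fin p) (_ : Fin q) => (0:ℤ)) = (0 : Matrix (Fin p) (Fin q) ℤ) := rfl
  rw [this, Matrix.mulVecLin_zero]

lemma sum_fin {q : ℕ} (h : q = 1) (x : Fin q → ℤ) : ∑ j, x j = x ⟨0, by omega⟩ := by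
  subst h; simp

theorem statement17 :
    -- the four graded objects are chain complexes:
    (∀ m : ℤ, (dA m).comp (dA (m+1)) = 0) ∧ (∀ m : ℤ, (dB m).comp (dB (m+1)) = 0) ∧
    (∀ m : ℤ, (dC m).comp (dC (m+1)) = 0) ∧ (∀ m : ℤ, (dD m).comp (dD (m+1)) = 0) ∧
    -- f, g, h are chain maps:
    (∀ m : ℤ, (dB m).comp (fm (m+1)) = (fm m).comp (dA m)) ∧
    (∀ m : ℤ, (dC m).comp (gm (m+1)) = (gm m).comp (dB m)) ∧
    (∀ m : ℤ, (dD m).comp (hm (m+1)) = (hm m).comp (dC m)) ∧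
    -- g∘f is nullhomotopic:
    (∃ S : ∀ t : ℤ, M rA t →ₗ[ℤ] M rC (t+1),
      ∀ t : ℤ, (gm (t+1)).comp (fm (t+1)) = (dC (t+1)).comp (S (t+1)) + (S t).comp (dA t)) ∧
    -- h∘g is nullhomotopic:
    (∃ T : ∀ t : ℤ, M rB t →ₗ[ℤ] M rD (t+1),
      ∀ t : ℤ, (hm (t+1)).comp (gm (t+1)) = (dD (t+1)).comp (T (t+1)) + (T t).comp (dB t)) ∧
    -- for EVERY such S and T, the Toda map φ(S,T) : ΣA → D, with components
    -- φ out of (ΣA)_{t+1} = A_t given by h∘S − T∘f, is not chain homotopic to zero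
    -- (the suspension differential being −∂_A):
    (∀ (S : ∀ t : ℤ, M rA t →ₗ[ℤ] M rC (t+1)) (T : ∀ t : ℤ, M rB t →ₗ[ℤ] M rD (t+1)),
      (∀ t : ℤ, (gm (t+1)).comp (fm (t+1)) = (dC (t+1)).comp (S (t+1)) + (S t).comp (dA t)) →
      (∀ t : ℤ, (hm (t+1)).comp (gm (t+1)) = (dD (t+1)).comp (T (t+1)) + (T t).comp (dB t)) →
      ¬ ∃ U : ∀ t : ℤ, M rA t →ₗ[ℤ] M rD (t+1+1),
          ∀ t : ℤ, (hm (t+1+1)).comp (S (t+1)) - (T (t+1)).comp (fm (t+1))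
            = (dD (t+1+1)).comp (U (t+1)) - (U t).comp (dA t)) := by
  refine ⟨?_, ?_, ?_, ?_, ?_, ?_, ?_, ?_, ?_, ?_⟩
  · intro m
    simp only [dA]
    rw [comp_const]
    apply const_zero
    split_ifs <;> first | omega | ring
  · intro m
    simp only [dB]
    rw [comp_const]
    apply const_zero
    split_ifs <;> first | omega | ring
  · intro m
    simp only [dC]
    rw [comp_const]
    apply const_zero
    split_ifs <;> first | omega | ring
  · intro m
    simp only [dD]
    rw [comp_const]
    apply const_zero
    ring
  · intro m
    simp only [dB, fm, dA]
    rw [comp_const, comp_const]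
    apply const_eq
    simp only [rA, rB]
    split_ifs <;> first | omega | push_cast <;> ring_nf <;> omega
  · intro m
    simp only [dC, gm, dB]
    rw [comp_const, comp_const]
    apply const_eq
    simp only [rB, rC]
    split_ifs <;> first | omega | push_cast <;> ring_nf <;> omega
  · intro m
    simp only [dD, hm, dC]
    rw [comp_const, comp_const]
    apply const_eq
    simp only [rC, rD]
    split_ifs <;> first | omega | push_cast <;> ring_nf <;> omega
  · refine ⟨fun t => Matrix.mulVecLin (Matrix.of fun _ _ => if t = 0 then (1:ℤ) else 0), fun t => ?_⟩
    simp only [gm, fm, dC, dA]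
    rw [comp_const, comp_const, comp_const, add_const]
    apply const_eq
    simp only [rA, rB, rC]
    split_ifs <;> first | omega | push_cast <;> ring_nf <;> omega
  · refine ⟨fun t => Matrix.mulVecLin (Matrix.of fun _ _ => if t = 1 then (1:ℤ) else 0), fun t => ?_⟩
    simp only [hm, gm, dD, dB]
    rw [comp_const, comp_const, comp_const, add_const]
    apply const_eq
    simp only [rB, rC, rD]
    split_ifs <;> first | omega | push_cast <;> ring_nf <;> omega
  · rintro S T hS hT ⟨U, hU⟩
    have hB1 : rB (0+1) = 1 := by norm_num [rB]
    have hB2 : rB (1+1) = 1 := by norm_num [rB]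
    have hC2 : rC (0+1+1) = 1 := by norm_num [rC]
    have hC2' : rC (1+1) = 1 := by norm_num [rC]
    have hA1 : rA (0+1) = 1 := by norm_num [rA]
    have hf : fm (0+1) (fun _ => (1:ℤ)) = fun _ => (1:ℤ) := by
      funext j
      simp only [fm, eval_c, sum_fin hA1]
      norm_num
    have hdA : dA 0 (fun _ => (1:ℤ)) = (2:ℤ) • fun _ => (1:ℤ) := by
      funext j
      simp only [dA, eval_c, sum_fin hA1]
      norm_num
    have hdB : dB 1 (fun _ => (1:ℤ)) = (4:ℤ) • fun _ => (1:ℤ) := by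
      funext j
      simp only [dB, eval_c, sum_fin hB2]
      norm_num
    have e1 := congrFun (LinearMap.congr_fun (hT 1) (fun _ => 1))
      (⟨0, by norm_num [rD]⟩ : Fin (rD (1+1)))
    simp only [LinearMap.comp_apply, LinearMap.add_apply, Pi.add_apply] at e1
    rw [hdB, map_smul] at e1
    simp only [hm, gm, dD, eval_c, sum_fin hB2, sum_fin hC2', Pi.smul_apply, smul_eq_mul] at e1
    norm_num at e1
    have e3 := congrFun (LinearMap.congr_fun (hU 0) (fun _ => 1))
      (⟨0, by norm_num [rD]⟩ : Fin (rD (0+1+1)))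
    simp only [LinearMap.comp_apply, LinearMap.sub_apply, Pi.sub_apply] at e3
    rw [hf, hdA, map_smul] at e3
    simp only [hm, dD, eval_c, sum_fin hC2, Pi.smul_apply, smul_eq_mul] at e3
    norm_num at e3
    have ebr : T (0+1) (fun _ => (1:ℤ)) (⟨0, by norm_num [rD]⟩ : Fin (rD (0+1+1)))
        = T 1 (fun _ => (1:ℤ)) (⟨0, by norm_num [rD]⟩ : Fin (rD (1+1))) := rfl
    norm_num at ebr
    rw [ebr] at e3
    omega
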